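/- In the two-period framework, assume that for all n, ℓ̂_P^n/E_n + 1/2 ≥ ℓ̂_P/E. Then for every α ∈ (0,1], the daily-proportional game G^DP_α has a unique Nash equilibrium, given for each consumer n by ℓ_P^n = ℓ̂_P^n + (E_n/E)·((1−α)/2)·(ℓ̂_O − ℓ̂_P) and ℓ_O^n = E_n − ℓ_P^n. -/

import Mathlib

lemma dp_limit_lemma (d G k : ℝ) (hk : 0 ≤ k)
    (h : ∀ t : ℝ, 0 < t → t ≤ 1 → 0 ≤ 2*d*G + k*t*d^2) : 0 ≤ d*G := by
  by_contra hneg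
  push_neg at hneg
  have hQ1 : (0:ℝ) < k*d^2 + 1 := by positivity
  have ht0 : 0 < min 1 ((-(d*G))/(k*d^2+1)) := lt_min one_pos (div_pos (by linarith) hQ1)
  have ht1 : min 1 ((-(d*G))/(k*d^2+1)) ≤ 1 := min_le_left _ _
  have ht2 : min 1 ((-(d*G))/(k*d^2+1)) ≤ (-(d*G))/(k*d^2+1) := min_le_right _ _
  have h5 : k*d^2*(min 1 ((-(d*G))/(k*d^2+1))) ≤ k*d^2*((-(d*G))/(k*d^2+1)) :=
    mul_le_mul_of_nonneg_left ht2 (by positivity)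
  have h6 : k*d^2*((-(d*G))/(k*d^2+1)) ≤ -(d*G) := by
    rw [← mul_div_assoc, div_le_iff₀ hQ1]
    nlinarith [mul_nonneg hk (sq_nonneg d)]
  have h8 := h _ ht0 ht1
  nlinarith [h8, h5, h6]

set_option maxHeartbeats 1600000 in
/-- In the two-period framework, under the assumption
`ℓ̂_P^n/E_n + 1/2 ≥ ℓ̂_P/E` for all `n`, for every `α ∈ (0,1]` the
daily-proportional game has a unique Nash equilibrium, given explicitly. -/
theorem dp_two_period_unique_NE
    (N : ℕ)
    (En : Fin N → ℝ) (hEn : ∀ n, 0 < En n)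
    (lhP lhO : Fin N → ℝ)
    (hlhP : ∀ n, 0 ≤ lhP n) (hlhO : ∀ n, 0 ≤ lhO n)
    (hlhsum : ∀ n, lhP n + lhO n = En n)
    (E LhP LhO : ℝ)
    (hE : E = ∑ n, En n) (hLhP : LhP = ∑ n, lhP n) (hLhO : LhO = ∑ n, lhO n)
    (hpeak : LhO ≤ E / 2 ∧ E / 2 ≤ LhP)
    (hassum : ∀ n, lhP n / En n + 1 / 2 ≥ LhP / E)
    (α : ℝ) (hα : α ∈ Set.Ioc (0 : ℝ) 1)
    (f : Fin N → (Fin N → ℝ) → (Fin N → ℝ) → ℝ)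
    (hf : ∀ n lP lO, f n lP lO =
      (1 - α) * (En n / E) * ((∑ m, lP m) ^ 2 + (∑ m, lO m) ^ 2)
        + α * ((lP n - lhP n) ^ 2 + (lO n - lhO n) ^ 2))
    (isNE : (Fin N → ℝ) → (Fin N → ℝ) → Prop)
    (hNE : ∀ lP lO, isNE lP lO ↔
      ((∀ n, lP n + lO n = En n ∧ 0 ≤ lP n ∧ 0 ≤ lO n) ∧
        ∀ n xP xO, xP + xO = En n → 0 ≤ xP → 0 ≤ xO →
          f n lP lO ≤ f n (Function.update lP n xP) (Function.update lO n xO)))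
    (eqP eqO : Fin N → ℝ)
    (heqP : ∀ n, eqP n = lhP n + (En n / E) * ((1 - α) / 2) * (LhO - LhP))
    (heqO : ∀ n, eqO n = En n - eqP n) :
    isNE eqP eqO ∧ ∀ lP lO, isNE lP lO → lP = eqP ∧ lO = eqO := by
  obtain ⟨hα0, hα1⟩ := hα
  rcases Nat.eq_zero_or_pos N with hN | hN
  · subst hN
    refine ⟨(hNE _ _).mpr ⟨fun n => n.elim0, fun n => n.elim0⟩, ?_⟩
    intro lP lO _
    exact ⟨funext fun n => n.elim0, funext fun n => n.elim0⟩
  -- main case: N > 0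
  have : Nonempty (Fin N) := ⟨⟨0, hN⟩⟩
  have hE0 : 0 < E := by
    rw [hE]; exact Finset.sum_pos (fun n _ => hEn n) Finset.univ_nonempty
  have hEne : E ≠ 0 := ne_of_gt hE0
  have hEnle : ∀ n, En n ≤ E := by
    intro n; rw [hE]
    exact Finset.single_le_sum (fun m _ => (hEn m).le) (Finset.mem_univ n)
  have hEtot : LhP + LhO = E := by
    rw [hLhP, hLhO, hE, ← Finset.sum_add_distrib]
    exact Finset.sum_congr rfl (fun n _ => hlhsum n)
  have hDle : LhO ≤ LhP := le_trans hpeak.1 hpeak.2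
  have hlhPle : ∀ n, lhP n ≤ En n := fun n => by linarith [hlhO n, hlhsum n]
  -- sum of the update
  have hupd : ∀ (n : Fin N) (g : Fin N → ℝ) (b : ℝ),
      ∑ m, Function.update g n b m = (∑ m, g m) - g n + b := by
    intro n g b
    rw [Finset.sum_update_of_mem (Finset.mem_univ n),
      Finset.sum_sdiff_eq_sub (Finset.singleton_subset_iff.mpr (Finset.mem_univ n)),
      Finset.sum_singleton]
    ring
  -- equilibrium aggregate sums
  have hSP : ∑ n, eqP n = LhP + (1 - α)/2 * (LhO - LhP) := by
    simp only [heqP]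
    rw [Finset.sum_add_distrib, ← hLhP]
    congr 1
    rw [← Finset.sum_mul, ← Finset.sum_mul, ← Finset.sum_div, ← hE]
    field_simp
  have hSO : ∑ n, eqO n = E - ∑ n, eqP n := by
    simp only [heqO]
    rw [Finset.sum_sub_distrib, ← hE]
  -- first-order condition at the equilibrium
  have hfoc : ∀ n, (1-α) * (En n / E) * ((∑ m, eqP m) - (∑ m, eqO m))
      + 2*α*(eqP n - lhP n) = 0 := by
    intro n
    rw [hSO, hSP, heqP n]
    linear_combination ((1-α) * (En n / E)) * hEtot
  -- bounds on eqP
  have hup : ∀ n, eqP n ≤ lhP n := by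
    intro n
    rw [heqP n]
    have h1 : 0 ≤ En n / E * ((1-α)/2) :=
      mul_nonneg (div_nonneg (hEn n).le hE0.le) (by linarith)
    nlinarith [mul_nonneg h1 (sub_nonneg.mpr hDle)]
  have hlow : ∀ n, 0 ≤ eqP n := by
    intro n
    have h6 : En n / E * (LhP - LhO) / 2 ≤ lhP n := by
      have h2 := mul_le_mul_of_nonneg_left (hassum n) (hEn n).le
      have h3 : En n * (lhP n / En n + 1/2) = lhP n + En n / 2 := by
        rw [mul_add, mul_div_cancel₀ _ (ne_of_gt (hEn n))]
        ring
      rw [h3] at h2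
      have h4 : En n * (LhP / E) = En n / E * LhP := by ring
      rw [h4] at h2
      have h7 : En n = En n / E * (LhP + LhO) := by
        rw [hEtot, div_mul_cancel₀ _ hEne]
      linarith [h2, h7]
    rw [heqP n]
    have h8 : 0 ≤ En n / E * (α/2) * (LhP - LhO) :=
      mul_nonneg (mul_nonneg (div_nonneg (hEn n).le hE0.le) (by linarith))
        (by linarith)
    nlinarith [h6, h8]
  have heqPle : ∀ n, eqP n ≤ En n := fun n => le_trans (hup n) (hlhPle n)
  constructor
  · -- existence
    rw [hNE]
    refine ⟨fun n => ⟨by rw [heqO n]; ring, hlow n, by rw [heqO n]; linarith [heqPle n]⟩, ?_⟩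
    intro n xP xO hxsum hxP0 hxO0
    have hxO : xO = En n - xP := by linarith
    rw [hf, hf, hupd n eqP xP, hupd n eqO xO]
    simp only [Function.update_self]
    rw [hxO, heqO n, show lhO n = En n - lhP n from by linarith [hlhsum n]]
    have hc0 : 0 ≤ (1-α) * (En n / E) :=
      mul_nonneg (by linarith) (div_nonneg (hEn n).le hE0.le)
    have hdfoc : (xP - eqP n) * ((1-α) * (En n / E) * ((∑ m, eqP m) - (∑ m, eqO m))
        + 2*α*(eqP n - lhP n)) = 0 := by rw [hfoc n, mul_zero]
    nlinarith [hdfoc, mul_nonneg hc0 (sq_nonneg (xP - eqP n)),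
      mul_nonneg hα0.le (sq_nonneg (xP - eqP n))]
  · -- uniqueness
    intro lP lO hne
    rw [hNE] at hne
    obtain ⟨hfeas, hbr⟩ := hne
    have hSOl : ∑ m, lO m = E - ∑ m, lP m := by
      rw [hE, ← Finset.sum_sub_distrib]
      exact Finset.sum_congr rfl (fun m _ => by linarith [(hfeas m).1])
    -- gradient inequality at the NE, in direction of eq
    have hGδ : ∀ n, 0 ≤ (eqP n - lP n) *
        ((1-α)*(En n / E)*((∑ m, lP m) - (∑ m, lO m)) + 2*α*(lP n - lhP n)) := by
      intro n
      obtain ⟨hsumn, hlP0, hlO0⟩ := hfeas n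
      have hlPle : lP n ≤ En n := by linarith
      have hc0 : 0 ≤ (1-α) * (En n / E) :=
        mul_nonneg (by linarith) (div_nonneg (hEn n).le hE0.le)
      refine dp_limit_lemma _ _ (2*(1-α)*(En n / E) + 2*α) (by linarith) ?_
      intro t ht0 ht1
      have hx0 : 0 ≤ lP n + t*(eqP n - lP n) := by
        nlinarith [mul_nonneg (by linarith : (0:ℝ) ≤ 1 - t) hlP0,
          mul_nonneg ht0.le (hlow n)]
      have hxE : lP n + t*(eqP n - lP n) ≤ En n := by
        nlinarith [mul_nonneg (by linarith : (0:ℝ) ≤ 1 - t) (by linarith : 0 ≤ En n - lP n),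
          mul_nonneg ht0.le (by linarith [heqPle n] : 0 ≤ En n - eqP n)]
      have hbr' := hbr n (lP n + t*(eqP n - lP n)) (En n - (lP n + t*(eqP n - lP n)))
        (by ring) hx0 (by linarith)
      rw [hf, hf, hupd n lP _, hupd n lO _] at hbr'
      simp only [Function.update_self] at hbr'
      rw [show lO n = En n - lP n from by linarith,
        show lhO n = En n - lhP n from by linarith [hlhsum n]] at hbr'
      have h9 : 0 ≤ t * (2*(eqP n - lP n)*((1-α)*(En n / E)*((∑ m, lP m) - (∑ m, lO m))
          + 2*α*(lP n - lhP n)) + (2*(1-α)*(En n / E) + 2*α)*t*(eqP n - lP n)^2) := by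
        rw [show (∑ m, lO m) = E - ∑ m, lP m from hSOl]
        rw [show (∑ m, lO m) = E - ∑ m, lP m from hSOl] at hbr'
        nlinarith [hbr']
      have h10 := le_of_mul_le_mul_left (by linarith : t*0 ≤ t * (2*(eqP n - lP n)*((1-α)*(En n / E)*((∑ m, lP m) - (∑ m, lO m))
          + 2*α*(lP n - lhP n)) + (2*(1-α)*(En n / E) + 2*α)*t*(eqP n - lP n)^2)) ht0
      linarith
    -- rewrite the gradient using the equilibrium FOC
    have hGid : ∀ n, (1-α)*(En n / E)*((∑ m, lP m) - (∑ m, lO m)) + 2*α*(lP n - lhP n)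
        = -2*(1-α)*(En n / E)*((∑ m, eqP m) - ∑ m, lP m) - 2*α*(eqP n - lP n) := by
      intro n
      have h1 := hfoc n
      have h2 := hSOl
      have h3 := hSO
      linear_combination h1 + ((1-α)*(En n / E)) * h3 - ((1-α)*(En n / E)) * h2
    have hn2 : ∀ n, (1-α)*((∑ m, eqP m) - ∑ m, lP m)*(eqP n - lP n)
        + α*(eqP n - lP n)^2 ≤ 0 := by
      intro n
      have h0 := hGδ n
      rw [hGid n] at h0
      have h1 : 0 ≤ E / En n * ((eqP n - lP n) *
          (-2*(1-α)*(En n / E)*((∑ m, eqP m) - ∑ m, lP m) - 2*α*(eqP n - lP n))) :=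
        mul_nonneg (div_nonneg hE0.le (hEn n).le) h0
      have hkey : E / En n * ((eqP n - lP n) *
          (-2*(1-α)*(En n / E)*((∑ m, eqP m) - ∑ m, lP m) - 2*α*(eqP n - lP n)))
          = -2*(1-α)*((∑ m, eqP m) - ∑ m, lP m)*(eqP n - lP n)
            - 2*α*(E / En n)*(eqP n - lP n)^2 := by
        have hcan : E / En n * (En n / E) = 1 := by
          field_simp
          exact div_self (ne_of_gt (hEn n))
        linear_combination (-2*(1-α)*((∑ m, eqP m) - ∑ m, lP m)*(eqP n - lP n)) * hcan
      rw [hkey] at h1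
      have hone : 1 ≤ E / En n := (one_le_div (hEn n)).mpr (hEnle n)
      have hint := mul_le_mul_of_nonneg_right hone (mul_nonneg hα0.le (sq_nonneg (eqP n - lP n)))
      nlinarith [h1, hint]
    have hS1 : ∑ n, ((1-α)*((∑ m, eqP m) - ∑ m, lP m)*(eqP n - lP n)
        + α*(eqP n - lP n)^2) ≤ 0 := by
      calc ∑ n, ((1-α)*((∑ m, eqP m) - ∑ m, lP m)*(eqP n - lP n)
          + α*(eqP n - lP n)^2) ≤ ∑ _n : Fin N, (0:ℝ) :=
            Finset.sum_le_sum (fun n _ => hn2 n)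
        _ = 0 := by simp
    have hS2 : ∑ n, ((1-α)*((∑ m, eqP m) - ∑ m, lP m)*(eqP n - lP n)
        + α*(eqP n - lP n)^2)
        = (1-α)*((∑ m, eqP m) - ∑ m, lP m)^2 + α * ∑ n, (eqP n - lP n)^2 := by
      rw [Finset.sum_add_distrib, ← Finset.mul_sum, ← Finset.mul_sum,
        Finset.sum_sub_distrib]
      ring
    rw [hS2] at hS1
    have hS3 : ∑ n, (eqP n - lP n)^2 ≤ 0 := by
      nlinarith [hS1, mul_nonneg (by linarith : (0:ℝ) ≤ 1-α)
        (sq_nonneg ((∑ m, eqP m) - ∑ m, lP m)), hα0]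
    have hz : ∀ n, lP n = eqP n := by
      intro n
      have h1 : (eqP n - lP n)^2 ≤ 0 :=
        le_trans (Finset.single_le_sum (fun m _ => sq_nonneg (eqP m - lP m))
          (Finset.mem_univ n)) hS3
      have h2 : (eqP n - lP n)^2 = 0 := le_antisymm h1 (sq_nonneg _)
      have := (pow_eq_zero_iff two_ne_zero).mp h2
      linarith [sub_eq_zero.mp this]
    constructor
    · exact funext hz
    · funext n
      rw [heqO n, ← hz n]
      linarith [(hfeas n).1]
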